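/- Let σ(t) = 1/(1+e^{−t}) and φ(x) = e^{−x²/2}/√(2π). Then for all real a and x: σ(2a)·φ(x−a−1) / ( σ(2a)·φ(x−a−1) + σ(−2a)·φ(x−a+1) ) = σ(2x). In particular, the right-hand side does not depend on a: in the model where X₃ given A=a is the two-component Gaussian mixture N(a+1,1) with weight σ(2a) and N(a−1,1) with weight σ(−2a), the posterior probability P(Y=1 | X₃=x, A=a) induced by Bayes' rule (treating the first mixture component as Y=1) equals σ(2x) for every a, i.e., the score R* = X₃ has matching conditional frequencies. -/

import Mathlib

/-- With `σ(t) = 1/(1+e^{-t})` and `φ(x) = e^{-x²/2}/√(2π)`, for all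
real `a`, `x`:
`σ(2a)·φ(x−a−1) / (σ(2a)·φ(x−a−1) + σ(−2a)·φ(x−a+1)) = σ(2x)`.
In particular the right-hand side does not depend on `a`: in Scenario II the posterior
`P(Y=1 ∣ X₃=x, A=a)` equals `σ(2x)` for every `a`, i.e. the score `R* = X₃` has
matching conditional frequencies. -/
theorem scenario_II_posterior (a x : ℝ) :
    (1 / (1 + Real.exp (-(2 * a)))) *
        (Real.exp (-(x - a - 1) ^ 2 / 2) / Real.sqrt (2 * Real.pi)) /
      ((1 / (1 + Real.exp (-(2 * a)))) *
          (Real.exp (-(x - a - 1) ^ 2 / 2) / Real.sqrt (2 * Real.pi)) +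
        (1 / (1 + Real.exp (2 * a))) *
          (Real.exp (-(x - a + 1) ^ 2 / 2) / Real.sqrt (2 * Real.pi))) =
    1 / (1 + Real.exp (-(2 * x))) := by
  have hs : Real.sqrt (2 * Real.pi) > 0 := Real.sqrt_pos.mpr (by positivity)
  have h1 : (0:ℝ) < 1 + Real.exp (-(2*a)) := by positivity
  have h2 : (0:ℝ) < 1 + Real.exp (2*a) := by positivity
  have h3 : (0:ℝ) < 1 + Real.exp (-(2*x)) := by positivity
  have ea : Real.exp (-(x - a - 1) ^ 2 / 2) * Real.exp (-(2*x))
      = Real.exp (-(x - a + 1) ^ 2 / 2) * Real.exp (-(2*a)) := by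
    rw [← Real.exp_add, ← Real.exp_add]; congr 1; ring
  have eb : Real.exp (-(x - a - 1) ^ 2 / 2) * Real.exp (-(2*x)) * Real.exp (2*a)
      = Real.exp (-(x - a + 1) ^ 2 / 2) := by
    rw [← Real.exp_add, ← Real.exp_add]; congr 1; ring
  rw [div_eq_div_iff (by positivity) h3.ne']
  field_simp
  simp only [neg_div] at ea eb ⊢
  linear_combination ea + eb
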